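/- arXiv:2512.11227 — 2 statements merged into one kernel-verified Lean document; each statement's English description precedes it below -/
import Mathlib

section
/- Let T : H → H be a bounded linear operator that commutes with the representation, i.e. T ∘ ρ(g) = ρ(g) ∘ T for every g ∈ G. Each F_{s,t} is a closed T-invariant subspace of H, and the spectrum of T is the union of the spectra of the restrictions: σ(T) = ⋃_{s ∈ ZMod n₁} ⋃_{t ∈ ZMod n₂} σ(T|_{F_{s,t}}), where T|_{F_{s,t}} denotes the restriction of T to the Banach space F_{s,t}. -/
open Finset

/-- The irreducible character `τ_{s,t}` of `G = ZMod n₁ × ZMod n₂`: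
`τ_{s,t}(κ, ι) = exp(2πi s κ / n₁) · exp(2πi t ι / n₂)` (well defined on residues). -/
noncomputable def tauChar (n₁ n₂ : ℕ) (s : ZMod n₁) (t : ZMod n₂)
    (g : ZMod n₁ × ZMod n₂) : ℂ :=
  Complex.exp (2 * (Real.pi : ℂ) * Complex.I * (s.val : ℂ) * (g.1.val : ℂ) / (n₁ : ℂ)) *
    Complex.exp (2 * (Real.pi : ℂ) * Complex.I * (t.val : ℂ) * (g.2.val : ℂ) / (n₂ : ℂ))

noncomputable def ec (n s k : ℕ) : ℂ :=
  Complex.exp (2 * (Real.pi : ℂ) * Complex.I * (s : ℂ) * (k : ℂ) / (n : ℂ))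

lemma ec_eq_pow (n s k : ℕ) :
    ec n s k = (Complex.exp (2 * (Real.pi : ℂ) * Complex.I / n)) ^ (s * k) := by
  rw [ec, ← Complex.exp_nat_mul]
  congr 1
  push_cast
  ring

lemma ec_add (n s a b : ℕ) : ec n s (a + b) = ec n s a * ec n s b := by
  simp only [ec_eq_pow, ← pow_add, Nat.mul_add]

lemma ec_mod (n : ℕ) (hn : n ≠ 0) (s a : ℕ) : ec n s (a % n) = ec n s a := by
  have hζ : (Complex.exp (2 * (Real.pi : ℂ) * Complex.I / n)) ^ n = 1 :=
    (Complex.isPrimitiveRoot_exp n hn).pow_eq_one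
  conv_rhs => rw [← Nat.mod_add_div a n]
  rw [ec_add, ec_eq_pow n s (n * (a / n))]
  rw [show s * (n * (a / n)) = n * (s * (a / n)) by ring, pow_mul, hζ, one_pow, mul_one]

lemma ec_sum (n : ℕ) [NeZero n] (k : ZMod n) :
    ∑ s : ZMod n, ec n s.val k.val = if k = 0 then (n : ℂ) else 0 := by
  have hn : n ≠ 0 := NeZero.ne n
  set ζ := Complex.exp (2 * (Real.pi : ℂ) * Complex.I / n) with hζdef
  have hζ := Complex.isPrimitiveRoot_exp n hn
  have hrange : ∀ x : ℂ, ∑ s : ZMod n, x ^ (ZMod.val s) = ∑ j ∈ Finset.range n, x ^ j := by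
    intro x
    refine Finset.sum_nbij' (fun s => s.val) (fun j => (j : ZMod n)) ?_ ?_ ?_ ?_ ?_
    · intro s _; exact Finset.mem_range.mpr (ZMod.val_lt s)
    · intro j _; exact Finset.mem_univ _
    · intro s _; exact ZMod.natCast_rightInverse s
    · intro j hj; exact ZMod.val_cast_of_lt (Finset.mem_range.mp hj)
    · intro s _; rfl
  have hterm : ∀ s : ZMod n, ec n s.val k.val = (ζ ^ k.val) ^ s.val := by
    intro s
    rw [ec_eq_pow, mul_comm s.val k.val, pow_mul]
  rw [Finset.sum_congr rfl fun s _ => hterm s, hrange]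
  by_cases hk : k = 0
  · simp [hk]
  · rw [if_neg hk]
    have hkv : k.val ≠ 0 := fun h => hk (by rwa [← ZMod.val_eq_zero])
    have hne : ζ ^ k.val ≠ 1 := by
      intro h
      exact hkv (Nat.eq_zero_of_dvd_of_lt ((hζ.pow_eq_one_iff_dvd k.val).mp h) (ZMod.val_lt k))
    have hpow : (ζ ^ k.val) ^ n = 1 := by
      rw [← pow_mul, mul_comm, pow_mul, hζ.pow_eq_one, one_pow]
    rw [geom_sum_eq hne, hpow, sub_self, zero_div]


lemma tauChar_eq_ec (n₁ n₂ : ℕ) (s : ZMod n₁) (t : ZMod n₂) (g : ZMod n₁ × ZMod n₂) :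
    tauChar n₁ n₂ s t g = ec n₁ s.val g.1.val * ec n₂ t.val g.2.val := rfl

lemma tauChar_add (n₁ n₂ : ℕ) [NeZero n₁] [NeZero n₂] (s : ZMod n₁) (t : ZMod n₂)
    (g h : ZMod n₁ × ZMod n₂) :
    tauChar n₁ n₂ s t (g + h) = tauChar n₁ n₂ s t g * tauChar n₁ n₂ s t h := by
  simp only [tauChar_eq_ec, Prod.fst_add, Prod.snd_add,
    ZMod.val_add, ec_mod _ (NeZero.ne n₁), ec_mod _ (NeZero.ne n₂), ec_add]
  ring

lemma tauChar_zero (n₁ n₂ : ℕ) [NeZero n₁] [NeZero n₂] (s : ZMod n₁) (t : ZMod n₂) :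
    tauChar n₁ n₂ s t 0 = 1 := by
  simp [tauChar_eq_ec, ec, ZMod.val_zero]

lemma tauChar_neg_mul (n₁ n₂ : ℕ) [NeZero n₁] [NeZero n₂] (s : ZMod n₁) (t : ZMod n₂)
    (h : ZMod n₁ × ZMod n₂) :
    tauChar n₁ n₂ s t (-h) * tauChar n₁ n₂ s t h = 1 := by
  rw [← tauChar_add, neg_add_cancel, tauChar_zero]

lemma tauChar_sum (n₁ n₂ : ℕ) [NeZero n₁] [NeZero n₂] (g : ZMod n₁ × ZMod n₂) :
    ∑ s : ZMod n₁, ∑ t : ZMod n₂, tauChar n₁ n₂ s t g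
      = if g = 0 then ((n₁ : ℂ) * (n₂ : ℂ)) else 0 := by
  have : ∑ s : ZMod n₁, ∑ t : ZMod n₂, tauChar n₁ n₂ s t g
      = (∑ s : ZMod n₁, ec n₁ s.val g.1.val) * (∑ t : ZMod n₂, ec n₂ t.val g.2.val) := by
    rw [Finset.sum_mul_sum]
    simp [tauChar_eq_ec]
  rw [this, ec_sum, ec_sum]
  by_cases h1 : g.1 = 0 <;> by_cases h2 : g.2 = 0 <;> simp [Prod.ext_iff, h1, h2]

/-- The averaging operator `P_{s,t} = (1/(n₁n₂)) Σ_{g ∈ G} τ_{s,t}(g) ρ(g)` of (4.1),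
as a linear map, for a unitary representation `ρ` of `G = ZMod n₁ × ZMod n₂` on a
complex Hilbert space. -/
noncomputable def PavgL (n₁ n₂ : ℕ) [NeZero n₁] [NeZero n₂] {H : Type*}
    [NormedAddCommGroup H] [InnerProductSpace ℂ H]
    (ρ : Multiplicative (ZMod n₁ × ZMod n₂) →* (H ≃ₗᵢ[ℂ] H))
    (s : ZMod n₁) (t : ZMod n₂) : H →ₗ[ℂ] H :=
  ((n₁ : ℂ) * (n₂ : ℂ))⁻¹ •
    ∑ g : ZMod n₁ × ZMod n₂,
      tauChar n₁ n₂ s t g • ((ρ (Multiplicative.ofAdd g)).toLinearEquiv.toLinearMap)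

/-- `F_{s,t}`, the range of `P_{s,t}`, as a subspace of `H`. -/
noncomputable def Fsub (n₁ n₂ : ℕ) [NeZero n₁] [NeZero n₂] {H : Type*}
    [NormedAddCommGroup H] [InnerProductSpace ℂ H]
    (ρ : Multiplicative (ZMod n₁ × ZMod n₂) →* (H ≃ₗᵢ[ℂ] H))
    (s : ZMod n₁) (t : ZMod n₂) : Submodule ℂ H :=
  LinearMap.range (PavgL n₁ n₂ ρ s t)

section Rep

variable (n₁ n₂ : ℕ) [NeZero n₁] [NeZero n₂] {H : Type*}
  [NormedAddCommGroup H] [InnerProductSpace ℂ H]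
  (ρ : Multiplicative (ZMod n₁ × ZMod n₂) →* (H ≃ₗᵢ[ℂ] H))

lemma PavgL_apply (s : ZMod n₁) (t : ZMod n₂) (f : H) :
    PavgL n₁ n₂ ρ s t f
      = ((n₁ : ℂ) * (n₂ : ℂ))⁻¹ •
          ∑ g : ZMod n₁ × ZMod n₂, tauChar n₁ n₂ s t g • ρ (Multiplicative.ofAdd g) f := by
  simp [PavgL, LinearMap.sum_apply]

lemma rho_PavgL (s : ZMod n₁) (t : ZMod n₂) (h : ZMod n₁ × ZMod n₂) (f : H) :
    ρ (Multiplicative.ofAdd h) (PavgL n₁ n₂ ρ s t f)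
      = tauChar n₁ n₂ s t (-h) • PavgL n₁ n₂ ρ s t f := by
  have comp : ∀ g : ZMod n₁ × ZMod n₂,
      ρ (Multiplicative.ofAdd h) (ρ (Multiplicative.ofAdd g) f)
        = ρ (Multiplicative.ofAdd (h + g)) f := by
    intro g; rw [ofAdd_add, map_mul]; rfl
  rw [PavgL_apply, map_smul, map_sum]
  simp only [map_smul, comp]
  rw [Fintype.sum_equiv (Equiv.addLeft h)
    (fun g => tauChar n₁ n₂ s t g • ρ (Multiplicative.ofAdd (h + g)) f)
    (fun g => (tauChar n₁ n₂ s t (-h) * tauChar n₁ n₂ s t g) • ρ (Multiplicative.ofAdd g) f)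
    (fun g => by
      simp only [Equiv.coe_addLeft]
      rw [← tauChar_add, neg_add_cancel_left])]
  simp only [mul_smul, ← Finset.smul_sum]
  exact smul_comm _ _ _

lemma PavgL_idem (s : ZMod n₁) (t : ZMod n₂) (f : H) :
    PavgL n₁ n₂ ρ s t (PavgL n₁ n₂ ρ s t f) = PavgL n₁ n₂ ρ s t f := by
  conv_lhs => rw [PavgL_apply]
  have hτ : ∀ x : ZMod n₁ × ZMod n₂, tauChar n₁ n₂ s t x * tauChar n₁ n₂ s t (-x) = 1 :=
    fun x => by rw [mul_comm]; exact tauChar_neg_mul n₁ n₂ s t x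
  simp only [rho_PavgL, smul_smul, hτ, one_smul]
  have hN : ((n₁ : ℂ) * (n₂ : ℂ)) ≠ 0 :=
    mul_ne_zero (Nat.cast_ne_zero.mpr (NeZero.ne n₁)) (Nat.cast_ne_zero.mpr (NeZero.ne n₂))
  rw [Finset.sum_const, Finset.card_univ, Fintype.card_prod, ZMod.card, ZMod.card,
    ← Nat.cast_smul_eq_nsmul ℂ, smul_smul, Nat.cast_mul, inv_mul_cancel₀ hN, one_smul]

lemma PavgL_sum (f : H) :
    ∑ s : ZMod n₁, ∑ t : ZMod n₂, PavgL n₁ n₂ ρ s t f = f := by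
  have hN : ((n₁ : ℂ) * (n₂ : ℂ)) ≠ 0 :=
    mul_ne_zero (Nat.cast_ne_zero.mpr (NeZero.ne n₁)) (Nat.cast_ne_zero.mpr (NeZero.ne n₂))
  have hswap : ∑ s : ZMod n₁, ∑ t : ZMod n₂, ∑ g : ZMod n₁ × ZMod n₂,
        tauChar n₁ n₂ s t g • ρ (Multiplicative.ofAdd g) f
      = ∑ g : ZMod n₁ × ZMod n₂, ∑ s : ZMod n₁, ∑ t : ZMod n₂,
          tauChar n₁ n₂ s t g • ρ (Multiplicative.ofAdd g) f := by
    exact Eq.trans (Finset.sum_congr rfl fun s _ => Finset.sum_comm) Finset.sum_comm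
  simp only [PavgL_apply, ← Finset.smul_sum]
  rw [hswap]
  simp only [← Finset.sum_smul, tauChar_sum, ite_smul, zero_smul]
  rw [Finset.sum_ite_eq' Finset.univ (0 : ZMod n₁ × ZMod n₂)
    (fun g => ((n₁ : ℂ) * (n₂ : ℂ)) • ρ (Multiplicative.ofAdd g) f)]
  simp only [Finset.mem_univ, if_true, ofAdd_zero, map_one, LinearIsometryEquiv.coe_one, id_eq]
  rw [smul_smul, inv_mul_cancel₀ hN, one_smul]

lemma T_PavgL (T : H →L[ℂ] H)
    (hT : ∀ (g : ZMod n₁ × ZMod n₂) (f : H),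
      T (ρ (Multiplicative.ofAdd g) f) = ρ (Multiplicative.ofAdd g) (T f))
    (s : ZMod n₁) (t : ZMod n₂) (f : H) :
    T (PavgL n₁ n₂ ρ s t f) = PavgL n₁ n₂ ρ s t (T f) := by
  rw [PavgL_apply, PavgL_apply, map_smul, map_sum]
  simp only [map_smul, hT]

lemma mem_Fsub_iff (s : ZMod n₁) (t : ZMod n₂) (f : H) :
    f ∈ Fsub n₁ n₂ ρ s t ↔ PavgL n₁ n₂ ρ s t f = f := by
  constructor
  · rintro ⟨x, rfl⟩
    exact PavgL_idem n₁ n₂ ρ s t x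
  · intro h
    exact ⟨f, h⟩

lemma PavgL_continuous (s : ZMod n₁) (t : ZMod n₂) :
    Continuous (PavgL n₁ n₂ ρ s t) := by
  have : (PavgL n₁ n₂ ρ s t : H → H)
      = fun f => ((n₁ : ℂ) * (n₂ : ℂ))⁻¹ •
          ∑ g : ZMod n₁ × ZMod n₂, tauChar n₁ n₂ s t g • ρ (Multiplicative.ofAdd g) f :=
    funext fun f => PavgL_apply n₁ n₂ ρ s t f
  rw [this]
  exact (continuous_finset_sum _ fun g _ =>
    ((ρ (Multiplicative.ofAdd g)).continuous.const_smul _)).const_smul _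

lemma Fsub_isClosed (s : ZMod n₁) (t : ZMod n₂) :
    IsClosed ((Fsub n₁ n₂ ρ s t : Submodule ℂ H) : Set H) := by
  have : ((Fsub n₁ n₂ ρ s t : Submodule ℂ H) : Set H)
      = {f : H | PavgL n₁ n₂ ρ s t f = f} :=
    Set.ext fun f => mem_Fsub_iff n₁ n₂ ρ s t f
  rw [this]
  exact isClosed_eq (PavgL_continuous n₁ n₂ ρ s t) continuous_id

end Rep

/-- Abstract decomposition lemma: if finitely many "projections" `P i` commute with `A`,
are idempotent and sum to the identity, then `A` is bijective iff each restriction of `A`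
to `range (P i)` is bijective. -/
lemma bijective_iff_forall_restrict {ι H : Type*} [Fintype ι]
    [AddCommGroup H] [Module ℂ H]
    (P : ι → H →ₗ[ℂ] H) (A : H →ₗ[ℂ] H)
    (hsum : ∀ f, ∑ i, P i f = f)
    (hcomm : ∀ i f, A (P i f) = P i (A f))
    (hidem : ∀ i f, P i (P i f) = P i f)
    (hA : ∀ i, ∀ f ∈ LinearMap.range (P i), A f ∈ LinearMap.range (P i)) :
    Function.Bijective A ↔ ∀ i, Function.Bijective (A.restrict (hA i)) := by
  have hfix : ∀ i (y : H), y ∈ LinearMap.range (P i) → P i y = y := by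
    rintro i y ⟨z, rfl⟩; exact hidem i z
  constructor
  · rintro ⟨hinj, hsurj⟩ i
    constructor
    · intro x y hxy
      exact Subtype.ext (hinj (congrArg Subtype.val hxy))
    · intro y
      obtain ⟨x, hx⟩ := hsurj (y : H)
      refine ⟨⟨P i x, ⟨x, rfl⟩⟩, Subtype.ext ?_⟩
      show A (P i x) = (y : H)
      rw [hcomm, hx, hfix i _ y.2]
  · intro hb
    constructor
    · have h0 : ∀ z, A z = 0 → z = 0 := by
        intro z hz
        have hP : ∀ i, P i z = 0 := by
          intro i
          have h1 : A.restrict (hA i) ⟨P i z, ⟨z, rfl⟩⟩ = A.restrict (hA i) 0 := by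
            refine Subtype.ext ?_
            show A (P i z) = A ((0 : LinearMap.range (P i)) : H)
            rw [hcomm, hz, map_zero]
            simp
          have := (hb i).1 h1
          simpa [Subtype.ext_iff] using this
        calc z = ∑ i, P i z := (hsum z).symm
          _ = 0 := by simp [hP]
      intro x y hxy
      have : x - y = 0 := h0 (x - y) (by rw [map_sub, hxy, sub_self])
      exact sub_eq_zero.mp this
    · intro y
      choose x hx using fun i => (hb i).2 ⟨P i y, ⟨y, rfl⟩⟩
      refine ⟨∑ i, (x i : H), ?_⟩
      have hAx : ∀ i, A (x i : H) = P i y := by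
        intro i
        have := congrArg Subtype.val (hx i)
        simpa using this
      rw [map_sum]
      simp_rw [hAx]
      exact hsum y

/-- **Theorem 4.4 and its Remark (abstract form)**: if a bounded operator `T` commutes
with the representation, then each `F_{s,t}` is a closed `T`-invariant subspace and
`σ(T) = ⋃_{s,t} σ(T|_{F_{s,t}})`. -/
theorem spectrum_decomposition (n₁ n₂ : ℕ) [NeZero n₁] [NeZero n₂] {H : Type*}
    [NormedAddCommGroup H] [InnerProductSpace ℂ H] [CompleteSpace H]
    (ρ : Multiplicative (ZMod n₁ × ZMod n₂) →* (H ≃ₗᵢ[ℂ] H))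
    (T : H →L[ℂ] H)
    (hT : ∀ (g : ZMod n₁ × ZMod n₂) (f : H),
      T (ρ (Multiplicative.ofAdd g) f) = ρ (Multiplicative.ofAdd g) (T f)) :
    (∀ (s : ZMod n₁) (t : ZMod n₂), IsClosed ((Fsub n₁ n₂ ρ s t : Submodule ℂ H) : Set H)) ∧
    ∃ hinv : ∀ (s : ZMod n₁) (t : ZMod n₂) (f : H),
        f ∈ Fsub n₁ n₂ ρ s t → T f ∈ Fsub n₁ n₂ ρ s t,
      spectrum ℂ T = ⋃ (s : ZMod n₁), ⋃ (t : ZMod n₂),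
        spectrum ℂ ((T : H →ₗ[ℂ] H).restrict (hinv s t)) := by
  refine ⟨fun s t => Fsub_isClosed n₁ n₂ ρ s t, ?_⟩
  have hinv : ∀ (s : ZMod n₁) (t : ZMod n₂) (f : H),
      f ∈ Fsub n₁ n₂ ρ s t → T f ∈ Fsub n₁ n₂ ρ s t := by
    rintro s t f ⟨x, rfl⟩
    exact ⟨T x, (T_PavgL n₁ n₂ ρ T hT s t x).symm⟩
  refine ⟨hinv, ?_⟩
  ext μ
  -- the shifted operator as a linear map
  set A : H →ₗ[ℂ] H := (algebraMap ℂ (Module.End ℂ H) μ) - (T : H →ₗ[ℂ] H) with hAdef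
  have hAapp : ∀ f : H, A f = μ • f - T f := by
    intro f; simp [hAdef, Module.algebraMap_end_apply]
  have hAcoe : ⇑(algebraMap ℂ (H →L[ℂ] H) μ - T) = ⇑A := by
    funext f
    simp [hAapp, Algebra.algebraMap_eq_smul_one]
  have hAinv : ∀ (i : ZMod n₁ × ZMod n₂),
      ∀ f ∈ LinearMap.range (PavgL n₁ n₂ ρ i.1 i.2),
        A f ∈ LinearMap.range (PavgL n₁ n₂ ρ i.1 i.2) := by
    intro i f hf
    rw [hAapp]
    exact Submodule.sub_mem _ (Submodule.smul_mem _ _ hf) (hinv i.1 i.2 f hf)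
  have hcomm : ∀ (i : ZMod n₁ × ZMod n₂) (f : H),
      A (PavgL n₁ n₂ ρ i.1 i.2 f) = PavgL n₁ n₂ ρ i.1 i.2 (A f) := by
    intro i f
    rw [hAapp, hAapp, T_PavgL n₁ n₂ ρ T hT, map_sub, map_smul]
  have key := bijective_iff_forall_restrict (ι := ZMod n₁ × ZMod n₂)
    (fun i => PavgL n₁ n₂ ρ i.1 i.2) A
    (fun f => by rw [Fintype.sum_prod_type]; exact PavgL_sum n₁ n₂ ρ f)
    hcomm (fun i f => PavgL_idem n₁ n₂ ρ i.1 i.2 f) hAinv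
  have hres : ∀ (s : ZMod n₁) (t : ZMod n₂),
      (algebraMap ℂ (Module.End ℂ (Fsub n₁ n₂ ρ s t)) μ - (T : H →ₗ[ℂ] H).restrict (hinv s t))
        = A.restrict (hAinv (s, t)) := by
    intro s t
    ext x
    simp only [LinearMap.sub_apply, Module.algebraMap_end_apply, Submodule.coe_sub,
      SetLike.val_smul, LinearMap.restrict_coe_apply]
    exact (hAapp (x : H)).symm
  have hiff : IsUnit (algebraMap ℂ (H →L[ℂ] H) μ - T)
      ↔ ∀ (s : ZMod n₁) (t : ZMod n₂),
          IsUnit (algebraMap ℂ (Module.End ℂ (Fsub n₁ n₂ ρ s t)) μ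
            - (T : H →ₗ[ℂ] H).restrict (hinv s t)) := by
    rw [ContinuousLinearMap.isUnit_iff_bijective]
    have h1 : Function.Bijective ⇑(algebraMap ℂ (H →L[ℂ] H) μ - T)
        ↔ Function.Bijective ⇑A := by rw [hAcoe]
    rw [h1, key]
    constructor
    · intro h s t
      rw [Module.End.isUnit_iff, hres s t]
      exact h (s, t)
    · rintro h ⟨s, t⟩
      have := h s t
      rw [Module.End.isUnit_iff, hres s t] at this
      exact this
  simp only [Set.mem_iUnion, spectrum.mem_iff, hiff, not_forall]
end

section
/- Let n₁, n₂ ≥ 3 be coprime positive integers. Let C(n) denote the cycle graph on ZMod n (the simple graph on ZMod n in which i and j are adjacent iff i ≠ j and i − j = 1 or i − j = −1), and let Circ denote the circulant graph on ZMod (n₁·n₂) in which i and j are adjacent iff i ≠ j and i − j ∈ {n₁, −n₁, n₂, −n₂}. Then the box product (Cartesian product) of simple graphs C(n₁) □ C(n₂) is isomorphic to Circ, via the map (κ, ι) ↦ κ·n₂ + ι·n₁. -/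
/-- The cycle graph on `ZMod n`: `i` and `j` are adjacent iff `i ≠ j` and
`i − j = ±1`. -/
def cycleGraph (n : ℕ) : SimpleGraph (ZMod n) where
  Adj i j := i ≠ j ∧ (i - j = 1 ∨ i - j = -1)
  symm := ⟨by
    rintro i j ⟨hne, h | h⟩
    · exact ⟨hne.symm, Or.inr (by rw [← neg_sub, h])⟩
    · exact ⟨hne.symm, Or.inl (by rw [← neg_sub, h, neg_neg])⟩⟩
  loopless := ⟨fun i h => h.1 rfl⟩

/-- The circulant graph `C_{n₁n₂}(n₁, n₂)` on `ZMod (n₁·n₂)`: `i` and `j` are adjacent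
iff `i ≠ j` and `i − j ∈ {±n₁, ±n₂}`. -/
def circulantGraph (n₁ n₂ : ℕ) : SimpleGraph (ZMod (n₁ * n₂)) where
  Adj i j := i ≠ j ∧ (i - j = (n₁ : ZMod (n₁ * n₂)) ∨ i - j = -(n₁ : ZMod (n₁ * n₂)) ∨
    i - j = (n₂ : ZMod (n₁ * n₂)) ∨ i - j = -(n₂ : ZMod (n₁ * n₂)))
  symm := ⟨by
    rintro i j ⟨hne, h | h | h | h⟩
    · exact ⟨hne.symm, Or.inr (Or.inl (by rw [← neg_sub, h]))⟩
    · exact ⟨hne.symm, Or.inl (by rw [← neg_sub, h, neg_neg])⟩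
    · exact ⟨hne.symm, Or.inr (Or.inr (Or.inr (by rw [← neg_sub, h])))⟩
    · exact ⟨hne.symm, Or.inr (Or.inr (Or.inl (by rw [← neg_sub, h, neg_neg])))⟩⟩
  loopless := ⟨fun i h => h.1 rfl⟩

section PhiAux

set_option linter.unusedSectionVars false

variable (n₁ n₂ : ℕ)

/-- Multiplication by `n₂` as a hom `ZMod n₁ →+ ZMod (n₁ * n₂)`. -/
def phiFst : ZMod n₁ →+ ZMod (n₁ * n₂) :=
  ZMod.lift n₁ ⟨zmultiplesHom _ ((n₂ : ZMod (n₁ * n₂))), by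
    show (n₁ : ℤ) • ((n₂ : ZMod (n₁ * n₂))) = 0
    rw [zsmul_eq_mul]
    push_cast
    rw [← Nat.cast_mul, ZMod.natCast_self]⟩

/-- Multiplication by `n₁` as a hom `ZMod n₂ →+ ZMod (n₁ * n₂)`. -/
def phiSnd : ZMod n₂ →+ ZMod (n₁ * n₂) :=
  ZMod.lift n₂ ⟨zmultiplesHom _ ((n₁ : ZMod (n₁ * n₂))), by
    show (n₂ : ℤ) • ((n₁ : ZMod (n₁ * n₂))) = 0
    rw [zsmul_eq_mul]
    push_cast
    rw [← Nat.cast_mul, Nat.mul_comm, ZMod.natCast_self]⟩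

/-- The homomorphism `(κ, ι) ↦ κ n₂ + ι n₁`. -/
def phiHom : ZMod n₁ × ZMod n₂ →+ ZMod (n₁ * n₂) :=
  (phiFst n₁ n₂).comp (AddMonoidHom.fst _ _) + (phiSnd n₁ n₂).comp (AddMonoidHom.snd _ _)

variable [NeZero n₁] [NeZero n₂]

theorem phiFst_apply (a : ZMod n₁) :
    phiFst n₁ n₂ a = (a.val : ZMod (n₁ * n₂)) * (n₂ : ZMod (n₁ * n₂)) := by
  conv_lhs => rw [show a = ((a.val : ℤ) : ZMod n₁) by push_cast; simp]
  rw [phiFst, ZMod.lift_coe]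
  show ((a.val : ℤ)) • ((n₂ : ZMod (n₁ * n₂))) = _
  rw [zsmul_eq_mul]
  push_cast
  ring

theorem phiSnd_apply (b : ZMod n₂) :
    phiSnd n₁ n₂ b = (b.val : ZMod (n₁ * n₂)) * (n₁ : ZMod (n₁ * n₂)) := by
  conv_lhs => rw [show b = ((b.val : ℤ) : ZMod n₂) by push_cast; simp]
  rw [phiSnd, ZMod.lift_coe]
  show ((b.val : ℤ)) • ((n₁ : ZMod (n₁ * n₂))) = _
  rw [zsmul_eq_mul]
  push_cast
  ring

theorem phiHom_apply (p : ZMod n₁ × ZMod n₂) :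
    phiHom n₁ n₂ p = (p.1.val : ZMod (n₁ * n₂)) * (n₂ : ZMod (n₁ * n₂))
      + (p.2.val : ZMod (n₁ * n₂)) * (n₁ : ZMod (n₁ * n₂)) := by
  rw [phiHom]
  simp [phiFst_apply, phiSnd_apply]

theorem phiHom_injective (h : Nat.gcd n₁ n₂ = 1) : Function.Injective (phiHom n₁ n₂) := by
  rw [injective_iff_map_eq_zero]
  intro a ha
  rw [phiHom_apply] at ha
  have hz : ((a.1.val * n₂ + a.2.val * n₁ : ℕ) : ZMod (n₁ * n₂)) = 0 := by
    push_cast; exact ha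
  rw [ZMod.natCast_eq_zero_iff] at hz
  have hco : Nat.Coprime n₁ n₂ := h
  have hd1 : n₁ ∣ a.1.val * n₂ + a.2.val * n₁ := dvd_trans (Dvd.intro n₂ rfl) hz
  have hd2 : n₂ ∣ a.1.val * n₂ + a.2.val * n₁ := dvd_trans (Dvd.intro_left n₁ rfl) hz
  have h1 : n₁ ∣ a.1.val * n₂ :=
    (Nat.dvd_add_right (Dvd.intro_left _ rfl)).mp (by rwa [add_comm] at hd1)
  have h2 : n₂ ∣ a.2.val * n₁ :=
    (Nat.dvd_add_right (Dvd.intro_left _ rfl)).mp hd2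
  have hv1 : a.1.val = 0 :=
    Nat.eq_zero_of_dvd_of_lt (hco.dvd_of_dvd_mul_right h1) (ZMod.val_lt a.1)
  have hv2 : a.2.val = 0 :=
    Nat.eq_zero_of_dvd_of_lt (hco.symm.dvd_of_dvd_mul_right h2) (ZMod.val_lt a.2)
  have e1 : a.1 = 0 := (ZMod.val_eq_zero a.1).mp hv1
  have e2 : a.2 = 0 := (ZMod.val_eq_zero a.2).mp hv2
  exact Prod.ext e1 e2

end PhiAux

theorem cycleGraph_adj' {n : ℕ} (i j : ZMod n) :
    (cycleGraph n).Adj i j ↔ i ≠ j ∧ (i - j = 1 ∨ i - j = -1) := Iff.rfl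

theorem circulantGraph_adj' {n₁ n₂ : ℕ} (i j : ZMod (n₁ * n₂)) :
    (circulantGraph n₁ n₂).Adj i j ↔ i ≠ j ∧ (i - j = (n₁ : ZMod (n₁ * n₂)) ∨
      i - j = -(n₁ : ZMod (n₁ * n₂)) ∨ i - j = (n₂ : ZMod (n₁ * n₂)) ∨
      i - j = -(n₂ : ZMod (n₁ * n₂))) := Iff.rfl

/-- **`C_{n₁n₂}(n₁,n₂) ≅ Γ_{n₁} □ Γ_{n₂}` for coprime `n₁, n₂`** (Theorem 3.1 of [16],
used in Section 4): the Cartesian (box) product of the cycles on `n₁` and `n₂` vertices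
is isomorphic to the circulant graph `C_{n₁n₂}(n₁, n₂)`, via `(κ, ι) ↦ κ·n₂ + ι·n₁`. -/
theorem cycle_boxProd_iso_circulant (n₁ n₂ : ℕ) (h₁ : 3 ≤ n₁) (h₂ : 3 ≤ n₂)
    (h : Nat.gcd n₁ n₂ = 1) :
    ∃ e : (cycleGraph n₁ □ cycleGraph n₂) ≃g circulantGraph n₁ n₂,
      ∀ p : ZMod n₁ × ZMod n₂,
        e p = ((p.1.val : ZMod (n₁ * n₂)) * (n₂ : ZMod (n₁ * n₂))
              + (p.2.val : ZMod (n₁ * n₂)) * (n₁ : ZMod (n₁ * n₂))) := by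
  haveI : NeZero n₁ := ⟨by omega⟩
  haveI : NeZero n₂ := ⟨by omega⟩
  haveI : Fact (1 < n₁) := ⟨by omega⟩
  haveI : Fact (1 < n₂) := ⟨by omega⟩
  haveI : NeZero (n₁ * n₂) := ⟨Nat.mul_ne_zero (by omega) (by omega)⟩
  set Φ := phiHom n₁ n₂ with hΦ
  have hinj : Function.Injective Φ := phiHom_injective n₁ n₂ h
  have hbij : Function.Bijective Φ := by
    rw [Fintype.bijective_iff_injective_and_card]
    exact ⟨hinj, by simp [ZMod.card]⟩
  -- special values
  have hval01 : Φ (0, 1) = (n₁ : ZMod (n₁ * n₂)) := by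
    rw [hΦ, phiHom_apply]
    simp [ZMod.val_one]
  have hval10 : Φ (1, 0) = (n₂ : ZMod (n₁ * n₂)) := by
    rw [hΦ, phiHom_apply]
    simp [ZMod.val_one]
  have hval01' : Φ (0, -1) = -(n₁ : ZMod (n₁ * n₂)) := by
    have : ((0, -1) : ZMod n₁ × ZMod n₂) = -(0, 1) := by simp [Prod.ext_iff]
    rw [this, map_neg, hval01]
  have hval10' : Φ (-1, 0) = -(n₂ : ZMod (n₁ * n₂)) := by
    have : ((-1, 0) : ZMod n₁ × ZMod n₂) = -(1, 0) := by simp [Prod.ext_iff]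
    rw [this, map_neg, hval10]
  have key : ∀ d : ZMod n₁ × ZMod n₂,
      (Φ d = (n₁ : ZMod (n₁ * n₂)) ∨ Φ d = -(n₁ : ZMod (n₁ * n₂)) ∨
       Φ d = (n₂ : ZMod (n₁ * n₂)) ∨ Φ d = -(n₂ : ZMod (n₁ * n₂))) ↔
      (d = (0, 1) ∨ d = (0, -1) ∨ d = (1, 0) ∨ d = (-1, 0)) := by
    intro d
    rw [← hval01', ← hval10', ← hval01, ← hval10]
    simp [hinj.eq_iff]
  have h10 : (1 : ZMod n₁) ≠ 0 := one_ne_zero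
  have h20 : (1 : ZMod n₂) ≠ 0 := one_ne_zero
  have h10' : (-1 : ZMod n₁) ≠ 0 := neg_ne_zero.mpr one_ne_zero
  have h20' : (-1 : ZMod n₂) ≠ 0 := neg_ne_zero.mpr one_ne_zero
  refine ⟨⟨Equiv.ofBijective Φ hbij, ?_⟩, ?_⟩
  · intro p q
    show (circulantGraph n₁ n₂).Adj (Φ p) (Φ q) ↔ _
    rw [circulantGraph_adj', SimpleGraph.boxProd_adj, cycleGraph_adj', cycleGraph_adj']
    rw [show Φ p - Φ q = Φ (p - q) from (map_sub Φ p q).symm]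
    rw [key (p - q), hinj.ne_iff]
    obtain ⟨a, b⟩ := p
    obtain ⟨c, d⟩ := q
    simp only [Prod.mk_sub_mk, Prod.mk.injEq, ne_eq, Prod.ext_iff, sub_eq_zero]
    constructor
    · rintro ⟨hne, (⟨hac, hbd⟩ | ⟨hac, hbd⟩ | ⟨hac, hbd⟩ | ⟨hac, hbd⟩)⟩
      · exact Or.inr ⟨⟨fun hbd' => h20 (by rw [← hbd, hbd', sub_self]), Or.inl hbd⟩, hac⟩
      · exact Or.inr ⟨⟨fun hbd' => h20' (by rw [← hbd, hbd', sub_self]), Or.inr hbd⟩, hac⟩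
      · exact Or.inl ⟨⟨fun hac' => h10 (by rw [← hac, hac', sub_self]), Or.inl hac⟩, hbd⟩
      · exact Or.inl ⟨⟨fun hac' => h10' (by rw [← hac, hac', sub_self]), Or.inr hac⟩, hbd⟩
    · rintro (⟨⟨hne, (hac | hac)⟩, hbd⟩ | ⟨⟨hne, (hbd | hbd)⟩, hac⟩)
      · exact ⟨fun hh => hne hh.1, Or.inr (Or.inr (Or.inl ⟨hac, hbd⟩))⟩
      · exact ⟨fun hh => hne hh.1, Or.inr (Or.inr (Or.inr ⟨hac, hbd⟩))⟩
      · exact ⟨fun hh => hne hh.2, Or.inl ⟨hac, hbd⟩⟩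
      · exact ⟨fun hh => hne hh.2, Or.inr (Or.inl ⟨hac, hbd⟩)⟩
  · intro p
    show Φ p = _
    rw [hΦ, phiHom_apply]
end
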